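/- Let g : ℝ^m → ℝ be differentiable with L-Lipschitz gradient, bounded from below, and let (x_n), (y_n) be generated by y_n = x_n + (βn/(n+α))(x_n - x_{n-1}), x_{n+1} = y_n - s∇g(y_n), with β ∈ (0,1), α > 0, 0 < s < 2(1-β)/L and x_0 = x_{-1}. Then Σ_{n≥1} ‖x_n - x_{n-1}‖² < +∞; in particular x_n - x_{n-1} → 0. -/

import Mathlib

open Filter Topology RealInnerProductSpace intervalIntegral

lemma descent_aux {m : ℕ} (g : EuclideanSpace ℝ (Fin m) → ℝ) (L : ℝ)
    (hdiff : Differentiable ℝ g)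
    (hlip : ∀ u v, ‖gradient g u - gradient g v‖ ≤ L * ‖u - v‖)
    (hL : 0 < L) (u v : EuclideanSpace ℝ (Fin m)) :
    abs (g v - g u - ⟪gradient g u, v - u⟫) ≤ L / 2 * ‖v - u‖ ^ 2 := by
  set p : ℝ → EuclideanSpace ℝ (Fin m) := fun t => u + t • (v - u) with hp
  have hline : ∀ t : ℝ, HasDerivAt p (v - u) t := by
    intro t
    rw [hp]
    simpa using ((hasDerivAt_id t).smul_const (v - u)).const_add u
  have hφ : ∀ t : ℝ, HasDerivAt (fun t => g (p t)) ⟪gradient g (p t), v - u⟫ t := by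
    intro t
    have h1 : HasFDerivAt g (InnerProductSpace.toDual ℝ _ (gradient g (p t))) (p t) :=
      ((hdiff (p t)).hasGradientAt).hasFDerivAt
    exact h1.comp_hasDerivAt t (hline t)
  have hgc : Continuous (gradient g) := by
    have : LipschitzWith (Real.toNNReal L) (gradient g) := by
      apply LipschitzWith.of_dist_le_mul
      intro a b
      rw [dist_eq_norm, dist_eq_norm, Real.coe_toNNReal L hL.le]
      exact hlip a b
    exact this.continuous
  have hpc : Continuous p := by fun_prop
  have hcont : Continuous (fun t : ℝ => ⟪gradient g (p t), v - u⟫) :=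
    (hgc.comp hpc).inner continuous_const
  have key : (∫ t in (0:ℝ)..1, ⟪gradient g (p t), v - u⟫) = g v - g u := by
    have := integral_eq_sub_of_hasDerivAt (f := fun t => g (p t))
      (f' := fun t => ⟪gradient g (p t), v - u⟫) (fun t _ => hφ t)
      (hcont.intervalIntegrable 0 1)
    simpa [hp] using this
  have expand : g v - g u - ⟪gradient g u, v - u⟫
      = ∫ t in (0:ℝ)..1, ⟪gradient g (p t) - gradient g u, v - u⟫ := by
    have hsub : (∫ t in (0:ℝ)..1, ⟪gradient g (p t) - gradient g u, v - u⟫)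
        = (∫ t in (0:ℝ)..1, ⟪gradient g (p t), v - u⟫)
          - ∫ t in (0:ℝ)..1, ⟪gradient g u, v - u⟫ := by
      rw [← integral_sub (hcont.intervalIntegrable 0 1) intervalIntegrable_const]
      simp [inner_sub_left]
    rw [hsub, key]
    simp
  rw [expand, ← Real.norm_eq_abs]
  have hbd : ∀ t ∈ Set.Ioc (0:ℝ) 1,
      ‖⟪gradient g (p t) - gradient g u, v - u⟫‖ ≤ L * ‖v - u‖ ^ 2 * t := by
    intro t ht
    rw [Real.norm_eq_abs]
    calc |⟪gradient g (p t) - gradient g u, v - u⟫|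
        ≤ ‖gradient g (p t) - gradient g u‖ * ‖v - u‖ := abs_real_inner_le_norm _ _
      _ ≤ (L * ‖p t - u‖) * ‖v - u‖ := by
          exact mul_le_mul_of_nonneg_right (hlip _ _) (norm_nonneg _)
      _ = L * ‖v - u‖ ^ 2 * t := by
          have : p t - u = t • (v - u) := by simp [hp]
          rw [this, norm_smul, Real.norm_eq_abs, abs_of_pos ht.1]
          ring
  have h2 : ‖∫ t in (0:ℝ)..1, ⟪gradient g (p t) - gradient g u, v - u⟫‖
      ≤ |∫ t in (0:ℝ)..1, L * ‖v - u‖ ^ 2 * t| := by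
    refine (norm_integral_le_of_norm_le zero_le_one ?_ ?_).trans (le_abs_self _)
    · filter_upwards with t ht
      exact hbd t ht
    · exact (by fun_prop : Continuous fun t : ℝ => L * ‖v - u‖ ^ 2 * t).intervalIntegrable 0 1
  have h3 : (∫ t in (0:ℝ)..1, L * ‖v - u‖ ^ 2 * t) = L / 2 * ‖v - u‖ ^ 2 := by
    rw [integral_const_mul, integral_id]
    ring
  refine h2.trans ?_
  rw [h3, abs_of_nonneg (by positivity)]

lemma rho_pos (s L β c : ℝ) (hs₁ : 0 < s) (hL : 0 < L) (hβ₁ : 0 < β) (hβ₂ : β < 1)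
    (hs₂ : s < 2 * (1 - β) / L) (hc : c = |1/s - L|) :
    0 < 1/s - L/2 - β*c - L*β^2 := by
  have hsL : s * L < 2 * (1 - β) := by
    rw [lt_div_iff₀ hL] at hs₂; linarith
  have hinv : s * (1/s) = 1 := by field_simp
  rcases abs_cases (1/s - L) with ⟨h1, _⟩ | ⟨h1, _⟩ <;> rw [hc, h1]
  · nlinarith [mul_pos (mul_pos hs₁ hL) (mul_pos hβ₁ (show (0:ℝ) < 1 - β by linarith)),
      mul_pos hs₁ hL]
  · nlinarith [mul_pos hβ₁ hβ₁, mul_lt_mul_of_pos_left hsL hβ₁,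
      mul_lt_mul_of_pos_left hsL (mul_pos hβ₁ hβ₁), mul_pos (mul_pos hβ₁ hβ₁) hβ₁]

lemma scalar_step (s L β bn c δ ρ p q t gy gx1 gx2 : ℝ)
    (hs : 0 < s) (hL : 0 < L) (hβ1 : 0 < β)
    (hbn0 : 0 ≤ bn) (hbnβ : bn ≤ β)
    (hc : c = |1/s - L|)
    (hδ : δ = β*c/2 + L*β^2) (hρ : ρ = 1/s - L/2 - β*c - L*β^2)
    (hq : 0 ≤ q) (hp : 0 ≤ p) (ht : |t| ≤ q * p)
    (A : gx2 ≤ gy - (1/s)*(bn^2*q^2 - 2*bn*t + p^2) + L/2*(bn^2*q^2 - 2*bn*t + p^2))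
    (B : gy ≤ gx1 + bn*((1/s)*(bn*q^2 - t)) + L/2*(bn^2*q^2)) :
    gx2 + δ*p^2 ≤ gx1 + δ*q^2 - ρ*p^2 := by
  have hc0 : 0 ≤ c := hc ▸ abs_nonneg _
  have h1 : bn*(1/s - L)*t ≤ β*c*(p^2+q^2)/2 := by
    calc bn*(1/s - L)*t ≤ |bn*(1/s - L)*t| := le_abs_self _
      _ = bn * c * |t| := by rw [abs_mul, abs_mul, abs_of_nonneg hbn0, hc]
      _ ≤ β * c * (q*p) := by
          apply mul_le_mul (mul_le_mul_of_nonneg_right hbnβ hc0) ht (abs_nonneg _) (by positivity)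
      _ ≤ β*c*(p^2+q^2)/2 := by nlinarith [sq_nonneg (p-q), mul_nonneg hβ1.le hc0]
  have h2 : L*(bn^2*q^2) ≤ L*(β^2*q^2) :=
    mul_le_mul_of_nonneg_left
      (mul_le_mul_of_nonneg_right (pow_le_pow_left₀ hbn0 hbnβ 2) (sq_nonneg q)) hL.le
  subst hδ hρ
  linarith [A, B, h1, h2]

/-- For the inertial algorithm `yₙ = xₙ + (βn/(n+α))(xₙ - xₙ₋₁)`,
`xₙ₊₁ = yₙ - s∇g(yₙ)` with `g` bounded below, differentiable with `L`-Lipschitz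
gradient, `β ∈ (0,1)`, `α > 0`, `0 < s < 2(1-β)/L` and `x₀ = x₋₁`, the squared
consecutive differences are summable; in particular `xₙ - xₙ₋₁ → 0`.
(Indexing: `x (n+1)` plays the role of `xₙ`, `x 0` that of `x₋₁`.) -/
theorem sum_sq_diff_finite {m : ℕ} (g : EuclideanSpace ℝ (Fin m) → ℝ) (L : ℝ)
    (hdiff : Differentiable ℝ g)
    (hlip : ∀ u v, ‖gradient g u - gradient g v‖ ≤ L * ‖u - v‖)
    (hbdd : BddBelow (Set.range g))
    (β α s : ℝ) (hβ₁ : 0 < β) (hβ₂ : β < 1) (hα : 0 < α)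
    (hs₁ : 0 < s) (hs₂ : s < 2 * (1 - β) / L) (hL : 0 < L)
    (x y : ℕ → EuclideanSpace ℝ (Fin m)) (hinit : x 0 = x 1)
    (hy : ∀ n : ℕ, y n = x (n + 1) + ((β * n) / ((n : ℝ) + α)) • (x (n + 1) - x n))
    (hstep : ∀ n : ℕ, x (n + 2) = y n - s • gradient g (y n)) :
    Summable (fun n => ‖x (n + 1) - x n‖ ^ 2) ∧
    Tendsto (fun n => x (n + 1) - x n) atTop (𝓝 0) := by
  set d : ℕ → EuclideanSpace ℝ (Fin m) := fun n => x (n + 1) - x n with hdd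
  set b : ℕ → ℝ := fun n => β * n / ((n : ℝ) + α) with hbb
  have hden : ∀ n : ℕ, (0:ℝ) < (n : ℝ) + α := fun n =>
    add_pos_of_nonneg_of_pos (Nat.cast_nonneg n) hα
  have hb0 : ∀ n, 0 ≤ b n := fun n =>
    div_nonneg (mul_nonneg hβ₁.le (Nat.cast_nonneg n)) (hden n).le
  have hbβ : ∀ n, b n ≤ β := by
    intro n
    rw [hbb]
    dsimp only
    rw [div_le_iff₀ (hden n)]
    nlinarith [(Nat.cast_nonneg n : (0:ℝ) ≤ n), mul_pos hβ₁ hα]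
  set c : ℝ := |1/s - L| with hcc
  set δ : ℝ := β*c/2 + L*β^2 with hδδ
  set ρ : ℝ := 1/s - L/2 - β*c - L*β^2 with hρρ
  have hρ : 0 < ρ := rho_pos s L β c hs₁ hL hβ₁ hβ₂ hs₂ hcc
  have hc0 : 0 ≤ c := hcc ▸ abs_nonneg _
  have hδ0 : 0 ≤ δ := by
    rw [hδδ]
    nlinarith [mul_nonneg hβ₁.le hc0, mul_nonneg hL.le (sq_nonneg β)]
  -- the one-step energy inequality
  have hstepineq : ∀ n, g (x (n+2)) + δ * ‖d (n+1)‖^2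
      ≤ g (x (n+1)) + δ * ‖d n‖^2 - ρ * ‖d (n+1)‖^2 := by
    intro n
    have e2 : x (n+1) - y n = -(b n • d n) := by
      rw [hy n, hbb, hdd]
      abel
    have e1 : x (n+2) - y n = -(s • gradient g (y n)) := by
      rw [hstep n]
      abel
    have e3 : s • gradient g (y n) = b n • d n - d (n+1) := by
      have h7 : d (n+1) = b n • d n - s • gradient g (y n) := by
        show x (n+2) - x (n+1) = (β * (n:ℝ) / ((n:ℝ) + α)) • (x (n+1) - x n)
          - s • gradient g (y n)
        rw [hstep n, hy n]
        abel
      rw [h7]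
      abel
    have hnorm : ‖b n • d n - d (n+1)‖^2
        = (b n)^2*‖d n‖^2 - 2*(b n)*⟪d n, d (n+1)⟫ + ‖d (n+1)‖^2 := by
      rw [norm_sub_sq_real, real_inner_smul_left, norm_smul, Real.norm_eq_abs, mul_pow, sq_abs]
      ring
    have hGG : ‖s • gradient g (y n)‖^2 = s^2*‖gradient g (y n)‖^2 := by
      rw [norm_smul, Real.norm_eq_abs, mul_pow, sq_abs]
    have h4 : s^2*‖gradient g (y n)‖^2
        = (b n)^2*‖d n‖^2 - 2*(b n)*⟪d n, d (n+1)⟫ + ‖d (n+1)‖^2 := by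
      rw [← hGG, e3, hnorm]
    have sA : ⟪gradient g (y n), x (n+2) - y n⟫
        = -((1/s)*((b n)^2*‖d n‖^2 - 2*(b n)*⟪d n, d (n+1)⟫ + ‖d (n+1)‖^2)) := by
      rw [e1, inner_neg_right, real_inner_smul_right, real_inner_self_eq_norm_sq, ← h4]
      field_simp <;> ring
    have h5 : s * ⟪gradient g (y n), d n⟫ = (b n)*‖d n‖^2 - ⟪d n, d (n+1)⟫ := by
      rw [← real_inner_smul_left, e3, inner_sub_left, real_inner_smul_left,
        real_inner_self_eq_norm_sq, real_inner_comm]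
    have sB : ⟪gradient g (y n), x (n+1) - y n⟫
        = -((b n)*((1/s)*((b n)*‖d n‖^2 - ⟪d n, d (n+1)⟫))) := by
      rw [e2, inner_neg_right, real_inner_smul_right, ← h5]
      field_simp <;> ring
    have nA : ‖x (n+2) - y n‖^2
        = (b n)^2*‖d n‖^2 - 2*(b n)*⟪d n, d (n+1)⟫ + ‖d (n+1)‖^2 := by
      rw [e1, norm_neg, ← hnorm, e3]
    have nB : ‖x (n+1) - y n‖^2 = (b n)^2*‖d n‖^2 := by
      rw [e2, norm_neg, norm_smul, Real.norm_eq_abs, mul_pow, sq_abs]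
    have A0 := abs_le.mp (descent_aux g L hdiff hlip hL (y n) (x (n+2)))
    have B0 := abs_le.mp (descent_aux g L hdiff hlip hL (y n) (x (n+1)))
    have A : g (x (n+2)) ≤ g (y n)
        - (1/s)*((b n)^2*‖d n‖^2 - 2*(b n)*⟪d n, d (n+1)⟫ + ‖d (n+1)‖^2)
        + L/2*((b n)^2*‖d n‖^2 - 2*(b n)*⟪d n, d (n+1)⟫ + ‖d (n+1)‖^2) := by
      have := A0.2
      rw [sA, nA] at this
      linarith
    have B : g (y n) ≤ g (x (n+1)) + (b n)*((1/s)*((b n)*‖d n‖^2 - ⟪d n, d (n+1)⟫))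
        + L/2*((b n)^2*‖d n‖^2) := by
      have := B0.1
      rw [sB, nB] at this
      linarith
    exact scalar_step s L β (b n) c δ ρ ‖d (n+1)‖ ‖d n‖ ⟪d n, d (n+1)⟫
      (g (y n)) (g (x (n+1))) (g (x (n+2))) hs₁ hL hβ₁ (hb0 n) (hbβ n) hcc hδδ hρρ
      (norm_nonneg _) (norm_nonneg _) (abs_real_inner_le_norm _ _) A B
  -- energy
  set En : ℕ → ℝ := fun n => g (x (n+1)) + δ * ‖d n‖^2 with hEn
  have hE : ∀ n, ρ * ‖d (n+1)‖^2 ≤ En n - En (n+1) := by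
    intro n
    have := hstepineq n
    rw [hEn]
    dsimp only
    linarith
  obtain ⟨B0, hB0⟩ := hbdd
  have hgB : ∀ z, B0 ≤ g z := fun z => hB0 ⟨z, rfl⟩
  have hEB : ∀ n, B0 ≤ En n := by
    intro n
    rw [hEn]
    dsimp only
    have := hgB (x (n+1))
    nlinarith [mul_nonneg hδ0 (sq_nonneg ‖d n‖)]
  have hsum1 : Summable (fun n => ‖d (n+1)‖^2) := by
    apply summable_of_sum_range_le (c := (En 0 - B0)/ρ) (fun n => by positivity)
    intro N
    have h6 : ρ * ∑ k ∈ Finset.range N, ‖d (k+1)‖^2 ≤ En 0 - B0 := by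
      rw [Finset.mul_sum]
      calc ∑ k ∈ Finset.range N, ρ * ‖d (k+1)‖^2
          ≤ ∑ k ∈ Finset.range N, (En k - En (k+1)) :=
            Finset.sum_le_sum fun k _ => hE k
        _ = En 0 - En N := Finset.sum_range_sub' En N
        _ ≤ En 0 - B0 := by have := hEB N; linarith
    rw [le_div_iff₀ hρ]
    linarith [h6]
  have hsum : Summable (fun n => ‖d n‖^2) := (summable_nat_add_iff 1).mp hsum1
  have hsumx : Summable (fun n => ‖x (n+1) - x n‖^2) := hsum
  refine ⟨hsumx, ?_⟩
  have htz : Tendsto (fun n => ‖d n‖^2) atTop (𝓝 0) := hsum.tendsto_atTop_zero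
  have htn : Tendsto (fun n => ‖d n‖) atTop (𝓝 0) := by
    have h8 : Tendsto (fun n => Real.sqrt (‖d n‖ ^ 2)) atTop (𝓝 0) := by
      simpa [Function.comp_def] using (Real.continuous_sqrt.tendsto 0).comp htz
    simpa [Real.sqrt_sq (norm_nonneg _)] using h8
  have := tendsto_zero_iff_norm_tendsto_zero.mpr htn
  exact this
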